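/- Let A ∈ ℝ^{n×n} and B ∈ ℝ^{n×m} with the column space of A contained in the column space of B. Let x_0 ∈ ℝⁿ and let (x_t) be the DGR closed-loop trajectory with α = 0. Then for every t with 1 ≤ t ≤ n, ‖x_t‖ ≤ M_t(A) ‖x_0‖. -/

import Mathlib

open Matrix

noncomputable section

/-- The Euclidean norm on `Fin n → ℝ`. -/
def eucNorm {n : ℕ} (x : Fin n → ℝ) : ℝ := Real.sqrt (∑ i, (x i) ^ 2)

/-- `P` is the matrix of the orthogonal projection of `ℝⁿ` onto the subspace `V`:
the unique symmetric idempotent matrix whose range is `V`. -/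
def IsProjMatrix {n : ℕ} (P : Matrix (Fin n) (Fin n) ℝ) (V : Submodule ℝ (Fin n → ℝ)) : Prop :=
  P.IsSymm ∧ P * P = P ∧ LinearMap.range P.mulVecLin = V

/-- A real square matrix is Schur stable if every complex eigenvalue has modulus `< 1`,
i.e. its spectral radius is `< 1`. -/
def SchurStable {n : ℕ} (M : Matrix (Fin n) (Fin n) ℝ) : Prop :=
  ∀ (μ : ℂ) (v : Fin n → ℂ), v ≠ 0 →
    (M.map (algebraMap ℝ ℂ)).mulVec v = μ • v → ‖μ‖ < 1

/-- The operator norm of a matrix induced by the Euclidean vector norm: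
`‖M‖ = sup {‖M u‖ : ‖u‖ = 1}`. -/
def l2OpNorm {n m : ℕ} (M : Matrix (Fin n) (Fin m) ℝ) : ℝ :=
  sSup {c | ∃ x : Fin m → ℝ, eucNorm x = 1 ∧ c = eucNorm (M.mulVec x)}

/-- The instability number of order `t` of `A`:
`M_t(A) = sup { ∏ i ‖A v i‖ : (v 1, …, v t) orthonormal in ℝⁿ }`. -/
def instabilityNumber {n : ℕ} (A : Matrix (Fin n) (Fin n) ℝ) (t : ℕ) : ℝ :=
  sSup {c | ∃ v : Fin t → (Fin n → ℝ),
    (∀ i j, v i ⬝ᵥ v j = if i = j then 1 else 0) ∧ c = ∏ i, eucNorm (A.mulVec (v i))}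

lemma eucNorm_nonneg {n : ℕ} (x : Fin n → ℝ) : 0 ≤ eucNorm x := Real.sqrt_nonneg _

lemma eucNorm_sq {n : ℕ} (x : Fin n → ℝ) : eucNorm x ^ 2 = x ⬝ᵥ x := by
  rw [eucNorm, Real.sq_sqrt (Finset.sum_nonneg fun i _ => sq_nonneg _)]
  simp [dotProduct, sq]

lemma eucNorm_eq_sqrt_dot {n : ℕ} (x : Fin n → ℝ) : eucNorm x = Real.sqrt (x ⬝ᵥ x) := by
  simp [eucNorm, dotProduct, sq]

lemma eucNorm_le_of_dot_le {n : ℕ} {x y : Fin n → ℝ} (h : x ⬝ᵥ x ≤ y ⬝ᵥ y) :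
    eucNorm x ≤ eucNorm y := by
  rw [eucNorm_eq_sqrt_dot, eucNorm_eq_sqrt_dot]; exact Real.sqrt_le_sqrt h

lemma eucNorm_eq_zero {n : ℕ} {x : Fin n → ℝ} (h : eucNorm x = 0) : x = 0 := by
  have h2 : x ⬝ᵥ x = 0 := by rw [← eucNorm_sq, h]; ring
  funext i
  have := (Finset.sum_eq_zero_iff_of_nonneg (fun i _ => mul_self_nonneg (x i))).mp h2 i
    (Finset.mem_univ i)
  exact mul_self_eq_zero.mp this

lemma eucNorm_smul {n : ℕ} (c : ℝ) (x : Fin n → ℝ) : eucNorm (c • x) = |c| * eucNorm x := by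
  rw [eucNorm, eucNorm]
  have : ∑ i, (c • x) i ^ 2 = c ^ 2 * ∑ i, x i ^ 2 := by
    simp [Finset.mul_sum, mul_pow]
  rw [this, Real.sqrt_mul (sq_nonneg c), Real.sqrt_sq_eq_abs]

lemma eucNorm_le_add_orth {n : ℕ} {a b : Fin n → ℝ} (h : a ⬝ᵥ b = 0) :
    eucNorm a ≤ eucNorm (a + b) := by
  apply eucNorm_le_of_dot_le
  have hb : b ⬝ᵥ a = 0 := by rwa [dotProduct_comm]
  have : (a + b) ⬝ᵥ (a + b) = a ⬝ᵥ a + b ⬝ᵥ b := by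
    rw [add_dotProduct, dotProduct_add, dotProduct_add, h, hb]; ring
  rw [this]
  have hbb : (0:ℝ) ≤ b ⬝ᵥ b :=
    Finset.sum_nonneg fun i _ => mul_self_nonneg (b i)
  linarith

lemma proj_fix {n : ℕ} {P : Matrix (Fin n) (Fin n) ℝ} {V : Submodule ℝ (Fin n → ℝ)}
    (hP : IsProjMatrix P V) {w : Fin n → ℝ} (hw : w ∈ V) : P.mulVec w = w := by
  rw [← hP.2.2] at hw
  obtain ⟨u, rfl⟩ := hw
  rw [mulVecLin_apply, mulVec_mulVec, hP.2.1]

lemma proj_orth {n : ℕ} {P : Matrix (Fin n) (Fin n) ℝ} {V : Submodule ℝ (Fin n → ℝ)}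
    (hP : IsProjMatrix P V) (z : Fin n → ℝ) {w : Fin n → ℝ} (hw : w ∈ V) :
    (z - P.mulVec z) ⬝ᵥ w = 0 := by
  obtain ⟨hsym, hidem, hrange⟩ := hP
  rw [← hrange] at hw
  obtain ⟨u, rfl⟩ := hw
  rw [mulVecLin_apply, sub_dotProduct]
  have h1 : z ⬝ᵥ P.mulVec u = P.mulVec z ⬝ᵥ u := by
    rw [dotProduct_mulVec, ← mulVec_transpose, hsym.eq]
  have h2 : P.mulVec z ⬝ᵥ P.mulVec u = P.mulVec z ⬝ᵥ u := by
    rw [dotProduct_mulVec, ← mulVec_transpose, hsym.eq, mulVec_mulVec, hidem]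
  rw [h1, h2, sub_self]

lemma mulVec_eucNorm_le {n : ℕ} (A : Matrix (Fin n) (Fin n) ℝ) (v : Fin n → ℝ)
    (hv : v ⬝ᵥ v = 1) : eucNorm (A.mulVec v) ≤ Real.sqrt (∑ i, ∑ j, A i j ^ 2) := by
  rw [eucNorm]
  apply Real.sqrt_le_sqrt
  have hv' : (∑ j, v j ^ 2) = 1 := by simpa [dotProduct, sq] using hv
  calc ∑ i, (A.mulVec v i) ^ 2 = ∑ i, (∑ j, A i j * v j) ^ 2 := rfl
    _ ≤ ∑ i, ((∑ j, A i j ^ 2) * (∑ j, v j ^ 2)) :=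
        Finset.sum_le_sum fun i _ => Finset.sum_mul_sq_le_sq_mul_sq _ _ _
    _ = ∑ i, ∑ j, A i j ^ 2 := by simp [hv']


lemma instab_bdd {n : ℕ} (A : Matrix (Fin n) (Fin n) ℝ) (t : ℕ) :
    BddAbove {c | ∃ v : Fin t → (Fin n → ℝ),
      (∀ i j, v i ⬝ᵥ v j = if i = j then 1 else 0) ∧ c = ∏ i, eucNorm (A.mulVec (v i))} := by
  refine ⟨(Real.sqrt (∑ i, ∑ j, A i j ^ 2)) ^ t, ?_⟩
  rintro c ⟨v, hv, rfl⟩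
  calc ∏ i, eucNorm (A.mulVec (v i))
      ≤ ∏ _i : Fin t, Real.sqrt (∑ i, ∑ j, A i j ^ 2) :=
        Finset.prod_le_prod (fun i _ => eucNorm_nonneg _)
          (fun i _ => mulVec_eucNorm_le A (v i) (by simpa using hv i i))
    _ = (Real.sqrt (∑ i, ∑ j, A i j ^ 2)) ^ t := by simp

lemma instab_nonneg {n : ℕ} (A : Matrix (Fin n) (Fin n) ℝ) {t : ℕ} (ht : t ≤ n) :
    0 ≤ instabilityNumber A t := by
  classical
  set e : Fin t → Fin n → ℝ := fun i => Pi.single (Fin.castLE ht i) 1 with he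
  have hortho : ∀ i j, e i ⬝ᵥ e j = if i = j then 1 else 0 := by
    intro i j
    rw [he]
    simp only [single_dotProduct, one_mul, Pi.single_apply]
    by_cases hij : i = j
    · simp [hij]
    · rw [if_neg (fun h => hij (Fin.castLE_injective ht h)), if_neg hij]
  have hmem : (∏ i, eucNorm (A.mulVec (e i))) ∈ {c | ∃ v : Fin t → (Fin n → ℝ),
      (∀ i j, v i ⬝ᵥ v j = if i = j then 1 else 0) ∧ c = ∏ i, eucNorm (A.mulVec (v i))} :=
    ⟨e, hortho, rfl⟩
  have h0 : (0:ℝ) ≤ ∏ i, eucNorm (A.mulVec (e i)) :=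
    Finset.prod_nonneg fun i _ => eucNorm_nonneg _
  exact h0.trans (le_csSup (instab_bdd A t) hmem)


/-- When `R(A) ⊆ R(B)`, the DGR trajectory is bounded by the instability number. -/
theorem stmt12 {n m : ℕ} (A : Matrix (Fin n) (Fin n) ℝ) (B : Matrix (Fin n) (Fin m) ℝ)
    (hcol : LinearMap.range A.mulVecLin ≤ LinearMap.range B.mulVecLin)
    (PB : Matrix (Fin n) (Fin n) ℝ)
    (hPB : IsProjMatrix PB (LinearMap.range B.mulVecLin))
    (x : ℕ → Fin n → ℝ)
    (Pv : ℕ → Matrix (Fin n) (Fin n) ℝ)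
    (hPv : ∀ t, IsProjMatrix (Pv t)
      (Submodule.span ℝ (Set.range fun i : Fin t => x i.val)))
    (hdyn : ∀ t, x (t + 1) = A.mulVec (x t) - (PB * A).mulVec ((Pv t).mulVec (x t))) :
    ∀ t, 1 ≤ t → t ≤ n → eucNorm (x t) ≤ instabilityNumber A t * eucNorm (x 0) := by
  classical
  set y : ℕ → Fin n → ℝ := fun t => x t - (Pv t).mulVec (x t) with hy
  have hPBA : ∀ v : Fin n → ℝ, PB.mulVec (A.mulVec v) = A.mulVec v := by
    intro v
    have hmem : A.mulVec v ∈ LinearMap.range B.mulVecLin := hcol ⟨v, mulVecLin_apply A v⟩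
    exact proj_fix hPB hmem
  have hdyn' : ∀ t, x (t + 1) = A.mulVec (y t) := by
    intro t
    rw [hdyn t, ← mulVec_mulVec, hPBA, hy]
    rw [Matrix.mulVec_sub]
  have hPvt_mem : ∀ t, (Pv t).mulVec (x t) ∈
      Submodule.span ℝ (Set.range fun i : Fin t => x i.val) := by
    intro t
    rw [← (hPv t).2.2]
    exact ⟨x t, mulVecLin_apply _ _⟩
  have hy_orth : ∀ t, ∀ w ∈ Submodule.span ℝ (Set.range fun i : Fin t => x i.val),
      y t ⬝ᵥ w = 0 := fun t w hw => proj_orth (hPv t) (x t) hw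
  have hV_mono : ∀ s t : ℕ, s ≤ t →
      Submodule.span ℝ (Set.range fun i : Fin s => x i.val) ≤
      Submodule.span ℝ (Set.range fun i : Fin t => x i.val) := by
    intro s t hst
    apply Submodule.span_mono
    rintro _ ⟨i, rfl⟩
    exact ⟨⟨i.val, lt_of_lt_of_le i.isLt hst⟩, rfl⟩
  have hy_mem : ∀ t, y t ∈ Submodule.span ℝ (Set.range fun i : Fin (t+1) => x i.val) := by
    intro t
    have h1 : x t ∈ Submodule.span ℝ (Set.range fun i : Fin (t+1) => x i.val) :=
      Submodule.subset_span ⟨⟨t, Nat.lt_succ_self t⟩, rfl⟩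
    exact Submodule.sub_mem _ h1 (hV_mono t (t+1) (Nat.le_succ t) (hPvt_mem t))
  have hyy : ∀ i j : ℕ, j < i → y i ⬝ᵥ y j = 0 := fun i j hji =>
    hy_orth i (y j) (hV_mono (j+1) i hji (hy_mem j))
  have hynorm_le : ∀ t, eucNorm (y t) ≤ eucNorm (x t) := by
    intro t
    have horth : y t ⬝ᵥ (Pv t).mulVec (x t) = 0 := hy_orth t _ (hPvt_mem t)
    have hxt : x t = y t + (Pv t).mulVec (x t) := by rw [hy]; module
    calc eucNorm (y t) ≤ eucNorm (y t + (Pv t).mulVec (x t)) := eucNorm_le_add_orth horth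
      _ = eucNorm (x t) := by rw [← hxt]
  intro t ht1 htn
  by_cases hzero : ∃ i, i < t ∧ y i = 0
  · obtain ⟨i₀, hi₀t, hyi₀⟩ := hzero
    have hxz : ∀ s, i₀ + 1 ≤ s → x s = 0 := by
      intro s hs
      induction s, hs using Nat.le_induction with
      | base => rw [hdyn' i₀, hyi₀, mulVec_zero]
      | succ s hs ih =>
        have hys : y s = 0 := by rw [hy]; simp [ih]
        rw [hdyn' s, hys, mulVec_zero]
    have : eucNorm (x t) = 0 := by
      rw [hxz t hi₀t]
      simp [eucNorm]
    rw [this]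
    exact mul_nonneg (instab_nonneg A htn) (eucNorm_nonneg _)
  · push_neg at hzero
    set c : ℕ → ℝ := fun i => eucNorm (A.mulVec ((eucNorm (y i))⁻¹ • y i)) with hc
    have key : ∀ s, s ≤ t → eucNorm (x s) ≤ (∏ i ∈ Finset.range s, c i) * eucNorm (x 0) := by
      intro s hs
      induction s with
      | zero => simp
      | succ s ih =>
        have hst : s < t := hs
        have ih' := ih (le_of_lt hst)
        have hnys : eucNorm (y s) ≠ 0 := fun h => hzero s hst (eucNorm_eq_zero h)
        have hxs1 : x (s+1) = (eucNorm (y s)) • (A.mulVec ((eucNorm (y s))⁻¹ • y s)) := by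
          rw [hdyn' s, ← mulVec_smul, smul_inv_smul₀ hnys]
        have hxeq : eucNorm (x (s+1)) = eucNorm (y s) * c s := by
          rw [hxs1, eucNorm_smul, abs_of_nonneg (eucNorm_nonneg _), hc]
        rw [hxeq, Finset.prod_range_succ]
        calc eucNorm (y s) * c s ≤ eucNorm (x s) * c s :=
              mul_le_mul_of_nonneg_right (hynorm_le s) (eucNorm_nonneg _)
          _ ≤ ((∏ i ∈ Finset.range s, c i) * eucNorm (x 0)) * c s :=
              mul_le_mul_of_nonneg_right ih' (eucNorm_nonneg _)
          _ = (∏ i ∈ Finset.range s, c i) * c s * eucNorm (x 0) := by ring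
    set v : Fin t → Fin n → ℝ := fun i => (eucNorm (y i.val))⁻¹ • y i.val with hv
    have hvv : ∀ i j : Fin t, v i ⬝ᵥ v j = if i = j then 1 else 0 := by
      intro i j
      rw [hv]
      simp only [smul_dotProduct, dotProduct_smul, smul_eq_mul]
      by_cases hij : i = j
      · subst hij
        have hdot : y i.val ⬝ᵥ y i.val = eucNorm (y i.val) ^ 2 := (eucNorm_sq _).symm
        have hne : eucNorm (y i.val) ≠ 0 :=
          fun h => hzero i.val i.isLt (eucNorm_eq_zero h)
        rw [hdot, if_pos rfl, sq]
        field_simp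
      · have hd0 : y i.val ⬝ᵥ y j.val = 0 := by
          rcases lt_or_gt_of_ne (fun h : i.val = j.val => hij (Fin.val_injective h)) with h | h
          · rw [dotProduct_comm]; exact hyy j.val i.val h
          · exact hyy i.val j.val h
        rw [hd0, if_neg hij]
        ring
    have hprod_eq : (∏ i : Fin t, eucNorm (A.mulVec (v i))) = ∏ i ∈ Finset.range t, c i := by
      rw [← Fin.prod_univ_eq_prod_range (fun i => c i) t]
    have hle : (∏ i : Fin t, eucNorm (A.mulVec (v i))) ≤ instabilityNumber A t :=
      le_csSup (instab_bdd A t) ⟨v, hvv, rfl⟩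
    calc eucNorm (x t) ≤ (∏ i ∈ Finset.range t, c i) * eucNorm (x 0) := key t le_rfl
      _ = (∏ i : Fin t, eucNorm (A.mulVec (v i))) * eucNorm (x 0) := by rw [hprod_eq]
      _ ≤ instabilityNumber A t * eucNorm (x 0) :=
          mul_le_mul_of_nonneg_right hle (eucNorm_nonneg _)
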